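/- arXiv:2211.07163 — 2 statements merged into one kernel-verified Lean document; each statement's English description precedes it below -/
import Mathlib

section
/- Let L be a strongly continuous domain. If x ≪_s z and z ≤ ⋁D for a directed set D in L, then x ≪_s d for some d ∈ D. -/
open Set

variable {L : Type*}

/-- A directed subset: nonempty and directed under `≤`. -/
def DirSet [Preorder L] (D : Set L) : Prop := D.Nonempty ∧ DirectedOn (· ≤ ·) D

/-- Strongly Scott open sets (the family `σ^s(L)`). -/
def StronglyScottOpen [Preorder L] [SupSet L] (U : Set L) : Prop :=
  IsUpperSet U ∧ ∀ D : Set L, DirSet D → ∀ x : L,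
    Ici (sSup D) ∩ Ici x ⊆ U → ∃ d ∈ D, Ici d ∩ Ici x ⊆ U

/-- The strong Scott topology `σ_s(L)`, generated by the strongly Scott open sets. -/
def strongScott (L : Type*) [Preorder L] [SupSet L] : TopologicalSpace L :=
  TopologicalSpace.generateFrom {U | StronglyScottOpen U}

/-- Scott open sets. -/
def ScottOpen [Preorder L] [SupSet L] (U : Set L) : Prop :=
  IsUpperSet U ∧ ∀ D : Set L, DirSet D → sSup D ∈ U → (D ∩ U).Nonempty

/-- The Scott topology `σ(L)`. -/
def scottTop (L : Type*) [Preorder L] [SupSet L] : TopologicalSpace L :=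
  TopologicalSpace.generateFrom {U | ScottOpen U}

/-- The upper topology `υ(L)`. -/
def upperTop (L : Type*) [Preorder L] : TopologicalSpace L :=
  TopologicalSpace.generateFrom {U | ∃ x : L, U = (Iic x)ᶜ}

/-- The lower topology `ω(L)`. -/
def lowerTop (L : Type*) [Preorder L] : TopologicalSpace L :=
  TopologicalSpace.generateFrom {U | ∃ x : L, U = (Ici x)ᶜ}

/-- The strong way-below relation `x ≪_s y`. -/
def SWayBelow [Preorder L] (x y : L) : Prop :=
  ∀ D : Set L, DirSet D → ∀ a : L,
    (⋂ d ∈ D, Ici d) ∩ Ici a ⊆ Ici y → ∃ d ∈ D, Ici d ∩ Ici a ⊆ Ici x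

/-- The way-below relation `x ≪ y`. -/
def WayBelow [Preorder L] [SupSet L] (x y : L) : Prop :=
  ∀ D : Set L, DirSet D → y ≤ sSup D → ∃ d ∈ D, x ≤ d

/-- `X` with topology `t` is a C-space (w.r.t. the order of `L`). -/
def IsCSpace [Preorder L] (t : TopologicalSpace L) : Prop :=
  ∀ U : Set L, @IsOpen _ (t) U → ∀ x ∈ U, ∃ y ∈ U,
    x ∈ @interior L t (Ici y) ∧ Ici y ⊆ U

/-- `L` is a strongly continuous domain. -/
def StronglyContinuousDomain (L : Type*) [Preorder L] [SupSet L] : Prop :=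
  IsCSpace (strongScott L)

/-- `L` is a continuous domain. -/
def ContinuousDomain (L : Type*) [Preorder L] [SupSet L] : Prop :=
  ∀ x : L, DirSet {y | WayBelow y x} ∧ IsLUB {y | WayBelow y x} x

/-- `L` is a hypercontinuous domain. -/
def HypercontinuousDomain (L : Type*) [Preorder L] : Prop :=
  ∀ x : L, DirSet {y | x ∈ @interior L (upperTop L) (Ici y)} ∧
    IsLUB {y | x ∈ @interior L (upperTop L) (Ici y)} x

/-- The strong Lawson topology `λ_s(L)`: common refinement of `σ_s(L)` and `ω(L)`. -/
def strongLawson (L : Type*) [Preorder L] [SupSet L] : TopologicalSpace L :=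
  TopologicalSpace.generateFrom
    {U | @IsOpen _ (strongScott L) U ∨ @IsOpen _ (lowerTop L) U}

lemma sso_univ [Preorder L] [SupSet L] : StronglyScottOpen (univ : Set L) := by
  refine ⟨isUpperSet_univ, fun D hD x _ => ?_⟩
  obtain ⟨d, hd⟩ := hD.1
  exact ⟨d, hd, by simp⟩

lemma sso_inter [Preorder L] [SupSet L] {U V : Set L} (hU : StronglyScottOpen U)
    (hV : StronglyScottOpen V) : StronglyScottOpen (U ∩ V) := by
  refine ⟨hU.1.inter hV.1, fun D hD x hsub => ?_⟩
  obtain ⟨d1, hd1, h1⟩ := hU.2 D hD x (hsub.trans inter_subset_left)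
  obtain ⟨d2, hd2, h2⟩ := hV.2 D hD x (hsub.trans inter_subset_right)
  obtain ⟨d, hd, hdd1, hdd2⟩ := hD.2 d1 hd1 d2 hd2
  exact ⟨d, hd, fun w hw =>
    ⟨h1 ⟨le_trans hdd1 hw.1, hw.2⟩, h2 ⟨le_trans hdd2 hw.1, hw.2⟩⟩⟩

lemma open_basis [Preorder L] [SupSet L] {U : Set L}
    (hU : @IsOpen L (strongScott L) U) :
    ∀ z ∈ U, ∃ V, StronglyScottOpen V ∧ z ∈ V ∧ V ⊆ U := by
  have h : TopologicalSpace.GenerateOpen {U | StronglyScottOpen U} U := hU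
  clear hU
  induction h with
  | basic V hV => exact fun z hz => ⟨V, hV, hz, subset_rfl⟩
  | univ => exact fun z _ => ⟨univ, sso_univ, mem_univ z, subset_rfl⟩
  | inter U1 U2 _ _ ih1 ih2 =>
      intro z hz
      obtain ⟨V1, h1, hz1, hs1⟩ := ih1 z hz.1
      obtain ⟨V2, h2, hz2, hs2⟩ := ih2 z hz.2
      exact ⟨V1 ∩ V2, sso_inter h1 h2, ⟨hz1, hz2⟩, inter_subset_inter hs1 hs2⟩
  | sUnion S _ ih =>
      intro z hz
      obtain ⟨U, hUS, hzU⟩ := hz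
      obtain ⟨V, h1, h2, h3⟩ := ih U hUS z hzU
      exact ⟨V, h1, h2, h3.trans (subset_sUnion_of_mem hUS)⟩

lemma swb_of_sso [CompletePartialOrder L] {V : Set L} (hV : StronglyScottOpen V)
    {x z : L} (hz : z ∈ V) (hsub : V ⊆ Ici x) : SWayBelow x z := by
  intro D hD a h
  have hVsub : Ici (sSup D) ∩ Ici a ⊆ V := by
    intro w hw
    have hw' : w ∈ (⋂ d ∈ D, Ici d) ∩ Ici a :=
      ⟨mem_iInter₂.2 fun e he =>
        le_trans ((CompletePartialOrder.lubOfDirected D hD.2).1 he) hw.1, hw.2⟩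
    exact hV.1 (h hw') hz
  obtain ⟨d, hd, hsub'⟩ := hV.2 D hD a hVsub
  exact ⟨d, hd, hsub'.trans hsub⟩

lemma sso_compl_Iic [CompletePartialOrder L] (w : L) :
    StronglyScottOpen ((Iic w)ᶜ : Set L) := by
  refine ⟨fun a b hab ha hb => ha (le_trans hab hb), fun D hD a hsub => ?_⟩
  by_contra hcon
  push_neg at hcon
  have hdw : ∀ d ∈ D, d ≤ w := by
    intro d hd
    obtain ⟨v, hv, hv2⟩ := not_subset.1 (hcon d hd)
    exact le_trans hv.1 (not_not.1 hv2)
  have haw : a ≤ w := by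
    obtain ⟨d, hd⟩ := hD.1
    obtain ⟨v, hv, hv2⟩ := not_subset.1 (hcon d hd)
    exact le_trans hv.2 (not_not.1 hv2)
  have : w ∈ (Iic w)ᶜ :=
    hsub ⟨(CompletePartialOrder.lubOfDirected D hD.2).2 hdw, haw⟩
  exact this le_rfl

lemma swb_of_mem_interior [CompletePartialOrder L] {x z : L}
    (hz : z ∈ @interior L (strongScott L) (Ici x)) : SWayBelow x z := by
  letI : TopologicalSpace L := strongScott L
  obtain ⟨V, h1, h2, h3⟩ := open_basis (isOpen_interior (s := Ici x)) z hz
  exact swb_of_sso h1 h2 (h3.trans interior_subset)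

lemma mem_interior_of_swb [CompletePartialOrder L] (hL : StronglyContinuousDomain L)
    {x z : L} (hxz : SWayBelow x z) : z ∈ @interior L (strongScott L) (Ici x) := by
  letI : TopologicalSpace L := strongScott L
  set B := {y : L | z ∈ @interior L (strongScott L) (Ici y)} with hBdef
  obtain ⟨y0, _, hy0, _⟩ := hL univ isOpen_univ z (mem_univ z)
  have hBne : B.Nonempty := ⟨y0, hy0⟩
  have hBdir : DirectedOn (· ≤ ·) B := by
    intro y1 hy1 y2 hy2
    have hopen : @IsOpen L (strongScott L)
        (@interior L (strongScott L) (Ici y1) ∩ @interior L (strongScott L) (Ici y2)) :=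
      (isOpen_interior (s := Ici y1)).inter (isOpen_interior (s := Ici y2))
    obtain ⟨y, hyU, hyint, _⟩ := hL _ hopen z ⟨hy1, hy2⟩
    exact ⟨y, hyint, interior_subset hyU.1, interior_subset hyU.2⟩
  have hub : ∀ w, (∀ y ∈ B, y ≤ w) → z ≤ w := by
    intro w hw
    by_contra hzw
    have hopen : @IsOpen L (strongScott L) ((Iic w)ᶜ) :=
      TopologicalSpace.GenerateOpen.basic _ (sso_compl_Iic w)
    obtain ⟨y, hyU, hyint, _⟩ := hL _ hopen z hzw
    exact hyU (hw y hyint)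
  obtain ⟨b0, hb0⟩ := hBne
  have hsub : (⋂ y ∈ B, Ici y) ∩ Ici b0 ⊆ Ici z := by
    rintro w ⟨hw1, _⟩
    exact hub w (fun y hy => mem_iInter₂.1 hw1 y hy)
  obtain ⟨y0', hy0', hs⟩ := hxz B ⟨⟨b0, hb0⟩, hBdir⟩ b0 hsub
  obtain ⟨y1, hy1, h1, h2⟩ := hBdir y0' hy0' b0 hb0
  have hx : x ≤ y1 := hs ⟨h1, h2⟩
  exact (interior_mono (Ici_subset_Ici.2 hx)) hy1

theorem sWayBelow_of_le_dirSup [CompletePartialOrder L]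
    (hL : StronglyContinuousDomain L) {x z : L} {D : Set L}
    (hxz : SWayBelow x z) (hD : DirSet D) (hz : z ≤ sSup D) :
    ∃ d ∈ D, SWayBelow x d := by
  letI : TopologicalSpace L := strongScott L
  have hz' := mem_interior_of_swb hL hxz
  obtain ⟨V, hV, hzV, hVsub⟩ :=
    open_basis (isOpen_interior (s := Ici x)) z hz'
  obtain ⟨d0, hd0⟩ := hD.1
  have hsub : Ici (sSup D) ∩ Ici d0 ⊆ V := fun w hw =>
    hV.1 (le_trans hz hw.1) hzV
  obtain ⟨d1, hd1, hs1⟩ := hV.2 D hD d0 hsub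
  obtain ⟨d, hd, hdd1, hdd0⟩ := hD.2 d1 hd1 d0 hd0
  have hdV : d ∈ V := hs1 ⟨hdd1, hdd0⟩
  exact ⟨d, hd, swb_of_sso hV hdV
    (hVsub.trans interior_subset)⟩
end

section
/- If L is a strongly continuous domain, then (L, σ_s(L)) is locally compact; and if L additionally has a least element, then (L, σ_s(L)) is compact. -/
open Set

variable {L : Type*}

lemma strongScott_isUpperSet [Preorder L] [SupSet L] {U : Set L}
    (h : @IsOpen _ (strongScott L) U) : IsUpperSet U := by
  induction h with
  | basic V hV => exact hV.1
  | univ => exact isUpperSet_univ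
  | inter _ _ _ _ ih1 ih2 => exact ih1.inter ih2
  | sUnion S _ ih => exact isUpperSet_sUnion ih

lemma strongScott_isCompact_Ici [Preorder L] [SupSet L] (y : L) :
    @IsCompact L (strongScott L) (Ici y) := by
  refine @isCompact_of_finite_subcover L (strongScott L) (Ici y) ?_
  intro ι U hU hcov
  obtain ⟨i, hi⟩ := mem_iUnion.1 (hcov (mem_Ici.2 le_rfl))
  exact ⟨{i}, fun z hz => mem_iUnion₂.2
    ⟨i, Finset.mem_singleton_self i, strongScott_isUpperSet (hU i) hz hi⟩⟩

theorem strongScott_locallyCompact [CompletePartialOrder L]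
    (hL : StronglyContinuousDomain L) :
    @LocallyCompactSpace L (strongScott L) ∧
    ((∃ b : L, ∀ x : L, b ≤ x) → @CompactSpace L (strongScott L)) := by
  constructor
  · refine @LocallyCompactSpace.mk L (strongScott L) (fun x n hn => ?_)
    obtain ⟨U, hUn, hUopen, hxU⟩ := (@mem_nhds_iff L (strongScott L) x n).1 hn
    obtain ⟨y, hyU, hxint, hIciU⟩ := hL U hUopen x hxU
    refine ⟨Ici y, ?_, hIciU.trans hUn, strongScott_isCompact_Ici y⟩
    exact (@mem_nhds_iff L (strongScott L) x (Ici y)).2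
      ⟨@interior L (strongScott L) (Ici y), @interior_subset L (strongScott L) (Ici y), @isOpen_interior L (strongScott L) (Ici y), hxint⟩
  · rintro ⟨b, hb⟩
    refine @CompactSpace.mk L (strongScott L) ?_
    refine @isCompact_of_finite_subcover L (strongScott L) univ ?_
    intro ι U hU hcov
    obtain ⟨i, hi⟩ := mem_iUnion.1 (hcov (mem_univ b))
    exact ⟨{i}, fun z _ => mem_iUnion₂.2
      ⟨i, Finset.mem_singleton_self i, strongScott_isUpperSet (hU i) (hb z) hi⟩⟩
end
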